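/- The comultiplication Δ on A = R[X]/((X - x₁)(X - x₂)) is an A-bimodule map: Δ(a·b) = a·Δ(b) = Δ(a)·b for all a, b ∈ A, where A acts on A ⊗_R A by left multiplication on the left factor and right multiplication on the right factor. -/

import Mathlib

open Polynomial TensorProduct

set_option maxHeartbeats 1000000

theorem stmt11_aux (R : Type*) [CommRing R] (x₁ x₂ : R) (I : Ideal (Polynomial R))
    (hI : I = Ideal.span {(X - C x₁) * (X - C x₂)})
    (Δ : (Polynomial R ⧸ I) →ₗ[R] ((Polynomial R ⧸ I) ⊗[R] (Polynomial R ⧸ I)))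
    (hΔ1 : Δ 1 = (Ideal.Quotient.mk I X) ⊗ₜ[R] 1 + 1 ⊗ₜ[R] (Ideal.Quotient.mk I X) -
      (x₁ + x₂) • ((1 : Polynomial R ⧸ I) ⊗ₜ[R] 1))
    (hΔX : Δ (Ideal.Quotient.mk I X) =
      (Ideal.Quotient.mk I X) ⊗ₜ[R] (Ideal.Quotient.mk I X) -
      (x₁ * x₂) • ((1 : Polynomial R ⧸ I) ⊗ₜ[R] 1)) :
    ∀ a b : Polynomial R ⧸ I,
      Δ (a * b) = (TensorProduct.map (LinearMap.mulLeft R a) LinearMap.id) (Δ b) ∧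
      Δ (a * b) = (TensorProduct.map LinearMap.id (LinearMap.mulRight R b)) (Δ a) := by
  set xq := Ideal.Quotient.mk I X with hxq
  -- the key relation in the quotient ring
  have hrel : xq * xq = (x₁ + x₂) • xq - (x₁ * x₂) • 1 := by
    have h0 : ((X : R[X]) * X - ((x₁ + x₂) • X - (x₁ * x₂) • 1)) ∈ I := by
      rw [hI]
      apply Ideal.subset_span
      simp only [Set.mem_singleton_iff, smul_eq_C_mul, map_add, map_mul]
      ring
    have h := Ideal.Quotient.eq.mpr h0
    have hs : ∀ (r : R) (p : R[X]), Ideal.Quotient.mk I (r • p) = r • Ideal.Quotient.mk I p :=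
      fun r p => map_smul (Ideal.Quotient.mkₐ R I) r p
    simpa [map_sub, map_mul, hs] using h
  -- the quotient is spanned by 1 and xq
  have hspan : ∀ c : Polynomial R ⧸ I,
      c ∈ Submodule.span R ({1, xq} : Set (Polynomial R ⧸ I)) := by
    set S := Submodule.span R ({1, xq} : Set (Polynomial R ⧸ I)) with hS
    have h1 : (1 : Polynomial R ⧸ I) ∈ S := Submodule.subset_span (by simp)
    have hx : xq ∈ S := Submodule.subset_span (by simp)
    have hpow : ∀ n : ℕ, xq ^ n ∈ S := by
      intro n
      induction n using Nat.strong_induction_on with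
      | _ n ih =>
        match n with
        | 0 => simpa using h1
        | 1 => simpa using hx
        | (m+2) =>
          have h2 : xq ^ (m+2) = (x₁ + x₂) • xq ^ (m+1) - (x₁ * x₂) • xq ^ m := by
            have h3 : xq ^ (m+2) = xq ^ m * (xq * xq) := by ring
            rw [h3, hrel, mul_sub, mul_smul_comm, mul_smul_comm]
            ring_nf
          rw [h2]
          exact sub_mem (Submodule.smul_mem _ _ (ih (m+1) (by omega)))
            (Submodule.smul_mem _ _ (ih m (by omega)))
    intro c
    obtain ⟨p, rfl⟩ := Ideal.Quotient.mk_surjective c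
    induction p using Polynomial.induction_on' with
    | add p q hp hq => rw [map_add]; exact add_mem hp hq
    | monomial n r =>
      have h4 : Ideal.Quotient.mk I (monomial n r) = r • xq ^ n := by
        rw [← C_mul_X_pow_eq_monomial, ← smul_eq_C_mul, hxq, ← map_pow]
        exact map_smul (Ideal.Quotient.mkₐ R I) r (X ^ n)
      rw [h4]
      exact Submodule.smul_mem _ _ (hpow n)
  -- linearity of the tensor actions in the acting element
  have hLadd : ∀ a a' : Polynomial R ⧸ I,
      TensorProduct.map (LinearMap.mulLeft R (a + a'))
        (LinearMap.id : (Polynomial R ⧸ I) →ₗ[R] (Polynomial R ⧸ I)) =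
      TensorProduct.map (LinearMap.mulLeft R a) LinearMap.id +
        TensorProduct.map (LinearMap.mulLeft R a') LinearMap.id := by
    intro a a'; apply TensorProduct.ext'; intro u v
    simp [add_mul, TensorProduct.add_tmul]
  have hLsmul : ∀ (r : R) (a : Polynomial R ⧸ I),
      TensorProduct.map (LinearMap.mulLeft R (r • a))
        (LinearMap.id : (Polynomial R ⧸ I) →ₗ[R] (Polynomial R ⧸ I)) =
      r • TensorProduct.map (LinearMap.mulLeft R a) LinearMap.id := by
    intro r a; apply TensorProduct.ext'; intro u v
    simp [smul_mul_assoc, TensorProduct.smul_tmul']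
  have hL0 : TensorProduct.map (LinearMap.mulLeft R (0 : Polynomial R ⧸ I))
      (LinearMap.id : (Polynomial R ⧸ I) →ₗ[R] (Polynomial R ⧸ I)) = 0 := by
    apply TensorProduct.ext'; intro u v; simp
  have hL1 : TensorProduct.map (LinearMap.mulLeft R (1 : Polynomial R ⧸ I))
      (LinearMap.id : (Polynomial R ⧸ I) →ₗ[R] (Polynomial R ⧸ I)) = LinearMap.id := by
    apply TensorProduct.ext'; intro u v; simp
  have hRadd : ∀ b b' : Polynomial R ⧸ I,
      TensorProduct.map (LinearMap.id : (Polynomial R ⧸ I) →ₗ[R] (Polynomial R ⧸ I))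
        (LinearMap.mulRight R (b + b')) =
      TensorProduct.map LinearMap.id (LinearMap.mulRight R b) +
        TensorProduct.map LinearMap.id (LinearMap.mulRight R b') := by
    intro b b'; apply TensorProduct.ext'; intro u v
    simp [mul_add, TensorProduct.tmul_add]
  have hRsmul : ∀ (r : R) (b : Polynomial R ⧸ I),
      TensorProduct.map (LinearMap.id : (Polynomial R ⧸ I) →ₗ[R] (Polynomial R ⧸ I))
        (LinearMap.mulRight R (r • b)) =
      r • TensorProduct.map LinearMap.id (LinearMap.mulRight R b) := by
    intro r b; apply TensorProduct.ext'; intro u v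
    simp [mul_smul_comm, TensorProduct.tmul_smul, TensorProduct.smul_tmul']
  have hR0 : TensorProduct.map (LinearMap.id : (Polynomial R ⧸ I) →ₗ[R] (Polynomial R ⧸ I))
      (LinearMap.mulRight R (0 : Polynomial R ⧸ I)) = 0 := by
    apply TensorProduct.ext'; intro u v; simp
  have hR1 : TensorProduct.map (LinearMap.id : (Polynomial R ⧸ I) →ₗ[R] (Polynomial R ⧸ I))
      (LinearMap.mulRight R (1 : Polynomial R ⧸ I)) = LinearMap.id := by
    apply TensorProduct.ext'; intro u v; simp
  -- left claim
  have claimL : ∀ a b : Polynomial R ⧸ I,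
      Δ (a * b) = (TensorProduct.map (LinearMap.mulLeft R a) LinearMap.id) (Δ b) := by
    have key : ∀ b : Polynomial R ⧸ I,
        Δ (xq * b) = (TensorProduct.map (LinearMap.mulLeft R xq) LinearMap.id) (Δ b) := by
      intro b
      induction hspan b using Submodule.span_induction with
      | mem c hc =>
        simp only [Set.mem_insert_iff, Set.mem_singleton_iff] at hc
        rcases hc with rfl | rfl
        · rw [mul_one, hΔX, hΔ1]
          simp only [map_sub, map_add, LinearMap.map_smul, TensorProduct.map_tmul,
            LinearMap.mulLeft_apply, LinearMap.id_apply, mul_one]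
          rw [hrel, TensorProduct.sub_tmul, TensorProduct.smul_tmul', TensorProduct.smul_tmul']
          try simp only [← TensorProduct.smul_tmul', TensorProduct.tmul_smul]
          module
        · rw [hrel, map_sub, LinearMap.map_smul, LinearMap.map_smul, hΔX, hΔ1]
          simp only [map_sub, LinearMap.map_smul, TensorProduct.map_tmul,
            LinearMap.mulLeft_apply, LinearMap.id_apply, mul_one]
          rw [hrel, TensorProduct.sub_tmul, TensorProduct.smul_tmul', TensorProduct.smul_tmul']
          try simp only [← TensorProduct.smul_tmul', TensorProduct.tmul_smul]
          module
      | zero => simp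
      | add c d hc hd ihc ihd => rw [mul_add, map_add, map_add, ihc, ihd, map_add]
      | smul r c hc ih => rw [mul_smul_comm, LinearMap.map_smul, ih, map_smul, map_smul]
    intro a b
    induction hspan a using Submodule.span_induction with
    | mem c hc =>
      simp only [Set.mem_insert_iff, Set.mem_singleton_iff] at hc
      rcases hc with rfl | rfl
      · rw [one_mul, hL1, LinearMap.id_apply]
      · exact key b
    | zero => rw [zero_mul, map_zero, hL0]; rfl
    | add c d hc hd ihc ihd =>
      rw [add_mul, map_add, ihc, ihd, hLadd]; rfl
    | smul r c hc ih =>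
      rw [smul_mul_assoc, LinearMap.map_smul, ih, hLsmul]; rfl
  -- right claim
  have claimR : ∀ a b : Polynomial R ⧸ I,
      Δ (a * b) = (TensorProduct.map LinearMap.id (LinearMap.mulRight R b)) (Δ a) := by
    have key : ∀ a : Polynomial R ⧸ I,
        Δ (a * xq) = (TensorProduct.map LinearMap.id (LinearMap.mulRight R xq)) (Δ a) := by
      intro a
      induction hspan a using Submodule.span_induction with
      | mem c hc =>
        simp only [Set.mem_insert_iff, Set.mem_singleton_iff] at hc
        rcases hc with rfl | rfl
        · rw [one_mul, hΔX, hΔ1]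
          simp only [map_sub, map_add, LinearMap.map_smul, TensorProduct.map_tmul,
            LinearMap.mulRight_apply, LinearMap.id_apply, one_mul]
          rw [hrel, TensorProduct.tmul_sub, TensorProduct.tmul_smul]
          try simp only [← TensorProduct.smul_tmul', TensorProduct.tmul_smul]
          module
        · rw [hrel, map_sub, LinearMap.map_smul, LinearMap.map_smul, hΔX, hΔ1]
          simp only [map_sub, LinearMap.map_smul, TensorProduct.map_tmul,
            LinearMap.mulRight_apply, LinearMap.id_apply, one_mul]
          rw [hrel, TensorProduct.tmul_sub, TensorProduct.tmul_smul]
          try simp only [← TensorProduct.smul_tmul', TensorProduct.tmul_smul]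
          module
      | zero => simp
      | add c d hc hd ihc ihd => rw [add_mul, map_add, map_add, ihc, ihd, map_add]
      | smul r c hc ih => rw [smul_mul_assoc, LinearMap.map_smul, ih, map_smul, map_smul]
    intro a b
    induction hspan b using Submodule.span_induction with
    | mem c hc =>
      simp only [Set.mem_insert_iff, Set.mem_singleton_iff] at hc
      rcases hc with rfl | rfl
      · rw [mul_one, hR1, LinearMap.id_apply]
      · exact key a
    | zero => rw [mul_zero, map_zero, hR0]; rfl
    | add c d hc hd ihc ihd =>
      rw [mul_add, map_add, ihc, ihd, hRadd]; rfl
    | smul r c hc ih =>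
      rw [mul_smul_comm, LinearMap.map_smul, ih, hRsmul]; rfl
  exact fun a b => ⟨claimL a b, claimR a b⟩

/-- The comultiplication on `A = R[X]/((X - x₁)(X - x₂))` is an `A`-bimodule map:
`Δ(a·b) = a·Δ(b) = Δ(a)·b`, where `A` acts on `A ⊗ A` by multiplication on the
left factor, resp. on the right factor. -/
theorem stmt11 (R : Type*) [CommRing R] (x₁ x₂ : R)
    (Δ : (Polynomial R ⧸ Ideal.span {(X - C x₁) * (X - C x₂)}) →ₗ[R]
      ((Polynomial R ⧸ Ideal.span {(X - C x₁) * (X - C x₂)}) ⊗[R]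
        (Polynomial R ⧸ Ideal.span {(X - C x₁) * (X - C x₂)})))
    (hΔ1 : Δ 1 =
      (Ideal.Quotient.mk (Ideal.span {(X - C x₁) * (X - C x₂)}) X) ⊗ₜ[R] 1 +
      1 ⊗ₜ[R] (Ideal.Quotient.mk (Ideal.span {(X - C x₁) * (X - C x₂)}) X) -
      (x₁ + x₂) • ((1 : Polynomial R ⧸ Ideal.span {(X - C x₁) * (X - C x₂)}) ⊗ₜ[R] 1))
    (hΔX : Δ (Ideal.Quotient.mk (Ideal.span {(X - C x₁) * (X - C x₂)}) X) =
      (Ideal.Quotient.mk (Ideal.span {(X - C x₁) * (X - C x₂)}) X) ⊗ₜ[R]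
        (Ideal.Quotient.mk (Ideal.span {(X - C x₁) * (X - C x₂)}) X) -
      (x₁ * x₂) • ((1 : Polynomial R ⧸ Ideal.span {(X - C x₁) * (X - C x₂)}) ⊗ₜ[R] 1)) :
    ∀ a b : Polynomial R ⧸ Ideal.span {(X - C x₁) * (X - C x₂)},
      Δ (a * b) = (TensorProduct.map (LinearMap.mulLeft R a) LinearMap.id) (Δ b) ∧
      Δ (a * b) = (TensorProduct.map LinearMap.id (LinearMap.mulRight R b)) (Δ a) :=
  stmt11_aux R x₁ x₂ _ rfl Δ hΔ1 hΔX
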